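/- There is a universal constant C' > 2 with the following property. Consider the lower-bound construction with integers u > d ≥ 1, real 0 < α < 1, and sample size n. For any proper learning algorithm A : (X × {-1,1})^n → H, if α ≤ min{ sqrt( u·ln(u/d) / (C'·n) ), 1/C' } and d·C' ≤ u ≤ n/C', then with probability at least 1/16 over a uniformly random h from H and a sample S of n i.i.d. draws from D_h, the hypothesis g = A(S) satisfies |{i : g(x_i) = -1 and h(x_i) = -1}| ≤ d/2. -/

import Mathlib

open MeasureTheory
open scoped ENNReal

abbrev Label : Type := ↥({-1, 1} : Finset ℤ)

def lneg : Label := ⟨-1, by decide⟩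
def lpos : Label := ⟨1, by decide⟩

noncomputable def erD {X : Type*} [MeasurableSpace X]
    (D : Measure (X × Label)) (h : X → Label) : ℝ :=
  (D {p | h p.1 ≠ p.2}).toReal

/-- The distribution `D_h` of the lower-bound construction: every example is labeled `1`;
a point `i` with `h i = -1` has probability `(1-α)/u`, and a point `i` with `h i = 1`
has probability `(1-(1-α)d/u)/(u-d)`. -/
noncomputable def Dh (u d : ℕ) (α : ℝ) (h : Fin u → Label) : Measure (Fin u × Label) :=
  Measure.sum fun i : Fin u =>
    (ENNReal.ofReal (if h i = lneg then (1 - α) / (u : ℝ)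
        else (1 - (1 - α) * (d : ℝ) / (u : ℝ)) / ((u : ℝ) - (d : ℝ)))) •
      Measure.dirac (i, lpos)

/-- The hypothesis class of the lower-bound construction, as a finset:
all functions taking the value `-1` on exactly `d` points. -/
noncomputable def Hfin (u d : ℕ) : Finset (Fin u → Label) :=
  Finset.univ.filter fun h => (Finset.univ.filter fun i => h i = lneg).card = d

-- ===== auxiliary definitions =====

lemma label_cases : ∀ l : Label, l = lneg ∨ l = lpos := by decide
lemma lneg_ne_lpos : lneg ≠ lpos := by decide

noncomputable def wR (u d : ℕ) (α : ℝ) (h : Fin u → Label) (i : Fin u) : ℝ :=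
  if h i = lneg then (1 - α) / (u : ℝ) else (1 - (1 - α) * (d : ℝ) / (u : ℝ)) / ((u : ℝ) - (d : ℝ))

noncomputable def wlab (u d : ℕ) (α : ℝ) (h : Fin u → Label) (x : Fin u × Label) : ℝ :=
  if x.2 = lpos then wR u d α h x.1 else 0

def negset {u : ℕ} (h : Fin u → Label) : Finset (Fin u) := Finset.univ.filter fun i => h i = lneg

lemma card_negset {u d : ℕ} {h : Fin u → Label} (hh : h ∈ Hfin u d) :
    (Finset.univ.filter fun i => h i = lneg).card = d := by simpa [Hfin] using hh

lemma card_posset {u d : ℕ} (hdu : d ≤ u) {h : Fin u → Label} (hh : h ∈ Hfin u d) :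
    (Finset.univ.filter fun i => ¬ h i = lneg).card = u - d := by
  rw [Finset.filter_not, Finset.card_sdiff_of_subset (Finset.filter_subset _ _), card_negset hh]
  simp

lemma sum_wR {u d : ℕ} {α : ℝ} (hdu : d < u) {h : Fin u → Label} (hh : h ∈ Hfin u d) :
    ∑ i, wR u d α h i = 1 := by
  classical
  have hu : (0:ℝ) < u := by
    have : 0 < u := by omega
    exact_mod_cast this
  have hud : (d:ℝ) < u := by exact_mod_cast hdu
  have h1 : (u:ℝ) - d ≠ 0 := sub_ne_zero.mpr hud.ne'
  unfold wR
  rw [Finset.sum_ite, Finset.sum_const, Finset.sum_const, card_negset hh, card_posset hdu.le hh]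
  rw [nsmul_eq_mul, nsmul_eq_mul, Nat.cast_sub hdu.le]
  field_simp
  ring

lemma sum_wR_sq {u d : ℕ} {α : ℝ} (hdu : d < u) {h : Fin u → Label} (hh : h ∈ Hfin u d) :
    (u:ℝ) * ∑ i, (wR u d α h i)^2 = 1 + (d:ℝ) * α^2 / ((u:ℝ) - d) := by
  classical
  have hu : (0:ℝ) < u := by
    have : 0 < u := by omega
    exact_mod_cast this
  have hud : (d:ℝ) < u := by exact_mod_cast hdu
  have h1 : (u:ℝ) - d ≠ 0 := sub_ne_zero.mpr hud.ne'
  unfold wR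
  simp only [apply_ite (fun x : ℝ => x^2)]
  rw [Finset.sum_ite, Finset.sum_const, Finset.sum_const, card_negset hh, card_posset hdu.le hh]
  rw [nsmul_eq_mul, nsmul_eq_mul, Nat.cast_sub hdu.le]
  field_simp
  ring

lemma wR_nonneg {u d : ℕ} {α : ℝ} (hdu : d < u) (h0 : 0 ≤ α) (h1 : α ≤ 1)
    (h : Fin u → Label) (i : Fin u) : 0 ≤ wR u d α h i := by
  have hu : (0:ℝ) < u := by exact_mod_cast Nat.pos_of_ne_zero (by omega)
  have hud : (d:ℝ) < u := by exact_mod_cast hdu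
  unfold wR
  split
  · apply div_nonneg (by linarith) hu.le
  · apply div_nonneg _ (by linarith)
    rw [sub_nonneg, div_le_one hu]
    nlinarith [Nat.cast_nonneg (α := ℝ) d]

lemma Dh_univ {u d : ℕ} {α : ℝ} (h : Fin u → Label)
    (hsum : ∑ i, wR u d α h i = 1) (hnn : ∀ i, 0 ≤ wR u d α h i) :
    Dh u d α h Set.univ = 1 := by
  rw [Dh, Measure.sum_apply _ MeasurableSet.univ, tsum_fintype]
  simp only [Measure.smul_apply, Measure.dirac_apply, smul_eq_mul, Set.indicator_univ,
    Pi.one_apply, mul_one]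
  have : ∀ i : Fin u, (ENNReal.ofReal (if h i = lneg then (1 - α) / (u : ℝ)
        else (1 - (1 - α) * (d : ℝ) / (u : ℝ)) / ((u : ℝ) - (d : ℝ)))) = ENNReal.ofReal (wR u d α h i) := by
    intro i; rfl
  rw [Finset.sum_congr rfl (fun i _ => this i), ← ENNReal.ofReal_sum_of_nonneg (fun i _ => hnn i),
    hsum, ENNReal.ofReal_one]

lemma wlab_nonneg {u d : ℕ} {α : ℝ} {h : Fin u → Label} (hnn : ∀ i, 0 ≤ wR u d α h i)
    (x : Fin u × Label) : 0 ≤ wlab u d α h x := by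
  unfold wlab; split
  · exact hnn _
  · exact le_refl 0

lemma Dh_single' (u d : ℕ) (α : ℝ) (h : Fin u → Label) (x : Fin u × Label) :
    Dh u d α h {x} = ENNReal.ofReal (wlab u d α h x) := by
  obtain ⟨i0, l0⟩ := x
  rw [Dh, Measure.sum_apply _ (measurableSet_singleton _), tsum_fintype]
  have hne : ¬ (lpos = lneg) := by decide
  simp only [Measure.smul_apply, Measure.dirac_apply, smul_eq_mul,
    Set.indicator_apply, Set.mem_singleton_iff, Prod.mk.injEq]
  rcases label_cases l0 with rfl | rfl
  · simp [wlab, hne, lneg, lpos]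
  · simp only [wlab, wR, and_true, Pi.one_apply]
    rw [Finset.sum_eq_single i0]
    · simp
    · intro b _ hb; simp [hb]
    · simp

lemma pi_eval {u d n : ℕ} {α : ℝ} (h : Fin u → Label)
    (hsum : ∑ i, wR u d α h i = 1) (hnn : ∀ i, 0 ≤ wR u d α h i)
    (E : Set (Fin n → Fin u × Label)) [DecidablePred (· ∈ E)] :
    Measure.pi (fun _ : Fin n => Dh u d α h) E
      = ∑ S ∈ Finset.univ.filter (fun S => S ∈ E),
          ENNReal.ofReal (∏ j, wlab u d α h (S j)) := by
  classical
  haveI : IsProbabilityMeasure (Dh u d α h) := ⟨Dh_univ h hsum hnn⟩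
  have hsing : ∀ S : Fin n → Fin u × Label, MeasurableSet ({S} : Set (Fin n → Fin u × Label)) := by
    intro S
    rw [← Set.univ_pi_singleton S]
    exact MeasurableSet.univ_pi (fun j => measurableSet_singleton _)
  have hE : E = ⋃ S ∈ (Finset.univ.filter (fun S => S ∈ E)), ({S} : Set _) := by
    ext S; simp
  conv_lhs => rw [hE]
  rw [measure_biUnion_finset]
  · apply Finset.sum_congr rfl
    intro S _
    rw [← Set.univ_pi_singleton S, Measure.pi_pi]
    rw [Finset.prod_congr rfl (fun j (_ : j ∈ Finset.univ) => Dh_single' u d α h (S j))]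
    rw [← ENNReal.ofReal_prod_of_nonneg (fun j _ => wlab_nonneg hnn (S j))]
  · intro a _ b _ hab
    simp [Set.disjoint_singleton_left, hab]
  · exact fun S _ => hsing S

lemma eq_of_negset {u : ℕ} {h h' : Fin u → Label} (e : negset h = negset h') : h = h' := by
  funext i
  have := Finset.ext_iff.mp e i
  simp only [negset, Finset.mem_filter, Finset.mem_univ, true_and] at this
  rcases label_cases (h i) with h1 | h1 <;> rcases label_cases (h' i) with h2 | h2 <;>
    simp_all [lneg_ne_lpos, lneg_ne_lpos.symm]

lemma card_Hfin (u d : ℕ) (hdu : d ≤ u) : (Hfin u d).card = u.choose d := by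
  classical
  have hc : (Finset.powersetCard d (Finset.univ : Finset (Fin u))).card = u.choose d := by
    rw [Finset.card_powersetCard, Finset.card_univ, Fintype.card_fin]
  rw [← hc]
  apply Finset.card_bij' (fun h _ => negset h)
    (fun T _ => fun i => if i ∈ T then lneg else lpos)
  · intro h hh
    simp only [Finset.mem_powersetCard]
    refine ⟨Finset.subset_univ _, ?_⟩
    simpa [Hfin, negset] using hh
  · intro T hT
    simp only [Finset.mem_powersetCard, Finset.card_univ] at hT
    simp only [Hfin, Finset.mem_filter, Finset.mem_univ, true_and]
    rw [← hT.2]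
    congr 1
    ext i
    by_cases hi : i ∈ T <;> simp [hi, lneg_ne_lpos.symm]
  · intro h _
    funext i
    rcases label_cases (h i) with h1 | h1 <;> simp [negset, h1, lneg_ne_lpos.symm]
  · intro T _
    ext i
    by_cases hi : i ∈ T <;> simp [negset, hi, lneg_ne_lpos.symm]

lemma count_overlap {u d : ℕ} (hd : 1 ≤ d) (G : Finset (Fin u)) (hG : G.card = d) :
    ((Hfin u d).filter fun h => d / 2 + 1 ≤ (G ∩ negset h).card).card
      ≤ 2 ^ d * ∑ j ∈ Finset.range (d - d / 2), (u - d).choose j := by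
  classical
  set tgt := G.powerset ×ˢ (Finset.range (d - d / 2)).biUnion
      (fun j => Finset.powersetCard j (Finset.univ \ G)) with htgt
  have hcard : tgt.card ≤ 2 ^ d * ∑ j ∈ Finset.range (d - d / 2), (u - d).choose j := by
    rw [Finset.card_product]
    apply Nat.mul_le_mul
    · rw [Finset.card_powerset, hG]
    · apply le_trans (Finset.card_biUnion_le)
      apply Finset.sum_le_sum
      intro j _
      rw [Finset.card_powersetCard, Finset.card_sdiff_of_subset (Finset.subset_univ G),
        Finset.card_univ, Fintype.card_fin, hG]
  refine le_trans (Finset.card_le_card_of_injOn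
    (fun h => (negset h ∩ G, negset h \ G)) ?_ ?_) hcard
  · intro h hh
    simp only [Finset.mem_coe, Finset.mem_filter] at hh
    obtain ⟨hmem, hov⟩ := hh
    have hcardneg : (negset h).card = d := by simpa [Hfin, negset] using hmem
    have hia : (negset h ∩ G).card + (negset h \ G).card = d := by
      rw [Finset.card_inter_add_card_sdiff, hcardneg]
    have hovc : (G ∩ negset h).card = (negset h ∩ G).card := by rw [Finset.inter_comm]
    simp only [htgt, Finset.mem_coe, Finset.mem_product, Finset.mem_powerset, Finset.mem_biUnion,
      Finset.mem_range, Finset.mem_powersetCard]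
    refine ⟨Finset.inter_subset_right, ⟨(negset h \ G).card, ?_, ?_, rfl⟩⟩
    · omega
    · intro i hi
      simp only [Finset.mem_sdiff] at hi ⊢
      exact ⟨Finset.mem_univ i, hi.2⟩
  · intro h1 hh1 h2 hh2 he
    simp only [Prod.mk.injEq] at he
    apply eq_of_negset
    have key : ∀ s : Finset (Fin u), s ∩ G ∪ s \ G = s := by
      intro s; ext i; simp only [Finset.mem_union, Finset.mem_inter, Finset.mem_sdiff]; tauto
    rw [← key (negset h1), he.1, he.2, key (negset h2)]

lemma choose_ratio {u d : ℕ} (hdu : d < u) :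
    ∀ i, i ≤ d → ((u.choose (d - i)) : ℝ) ≤ (u.choose d : ℝ) * ((d:ℝ)/((u:ℝ)-(d:ℝ)))^i := by
  have hud : (d:ℝ) < u := by exact_mod_cast hdu
  have hudpos : (0:ℝ) < (u:ℝ) - d := by linarith
  have hp0 : (0:ℝ) ≤ (d:ℝ)/((u:ℝ)-d) := div_nonneg (Nat.cast_nonneg d) hudpos.le
  intro i
  induction i with
  | zero => intro _; simp
  | succ i ih =>
    intro hi
    have hi' : i ≤ d := by omega
    set j := d - (i+1) with hj
    have hj1 : j + 1 = d - i := by omega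
    have hju : j < u := by omega
    have hujpos : (0:ℝ) < (u:ℝ) - j := by
      have : (j:ℝ) < u := by exact_mod_cast hju
      linarith
    have hnat := Nat.choose_succ_right_eq u j
    have hreal : ((u.choose j):ℝ) * ((u:ℝ) - j) = (u.choose (j+1) : ℝ) * ((j:ℝ)+1) := by
      have := congrArg (fun k : ℕ => (k : ℝ)) hnat
      push_cast [Nat.cast_sub hju.le] at this
      linarith [this]
    have hstep : ((u.choose j):ℝ) ≤ (u.choose (j+1) : ℝ) * ((d:ℝ)/((u:ℝ)-d)) := by
      have hj1d : (j:ℝ) + 1 ≤ d := by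
        have : j + 1 ≤ d := by omega
        exact_mod_cast this
      have hjd : (j:ℝ) ≤ d := by linarith
      have hfrac : ((j:ℝ)+1)/((u:ℝ)-j) ≤ (d:ℝ)/((u:ℝ)-d) := by
        rw [div_le_div_iff₀ hujpos hudpos]
        nlinarith [Nat.cast_nonneg (α := ℝ) d]
      have hchoose_nonneg : (0:ℝ) ≤ (u.choose (j+1) : ℝ) := Nat.cast_nonneg _
      have : ((u.choose j):ℝ) = (u.choose (j+1) : ℝ) * (((j:ℝ)+1)/((u:ℝ)-j)) := by
        field_simp
        linarith [hreal]
      rw [this]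
      exact mul_le_mul_of_nonneg_left hfrac hchoose_nonneg
    calc ((u.choose (d - (i+1))):ℝ) = (u.choose j : ℝ) := by rw [hj]
      _ ≤ (u.choose (j+1) : ℝ) * ((d:ℝ)/((u:ℝ)-d)) := hstep
      _ = (u.choose (d-i) : ℝ) * ((d:ℝ)/((u:ℝ)-d)) := by rw [hj1]
      _ ≤ (u.choose d : ℝ) * ((d:ℝ)/((u:ℝ)-d))^i * ((d:ℝ)/((u:ℝ)-d)) := by
          exact mul_le_mul_of_nonneg_right (ih hi') hp0
      _ = (u.choose d : ℝ) * ((d:ℝ)/((u:ℝ)-d))^(i+1) := by ring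

lemma geom_half_bound (N : ℕ) {p : ℝ} (hp0 : 0 ≤ p) (hp : p ≤ 1/2) :
    ∑ i ∈ Finset.range N, p ^ i ≤ 2 := by
  calc ∑ i ∈ Finset.range N, p ^ i ≤ ∑ i ∈ Finset.range N, (1/2:ℝ) ^ i := by
        apply Finset.sum_le_sum
        intro i _
        exact pow_le_pow_left₀ hp0 hp i
    _ ≤ 2 := by
        rw [geom_sum_eq (by norm_num : (1/2:ℝ) ≠ 1)]
        have h : ((1/2:ℝ)^N - 1) / ((1/2:ℝ) - 1) = 2 * (1 - (1/2:ℝ)^N) := by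
          field_simp; ring
        rw [h]
        have : (0:ℝ) ≤ (1/2:ℝ)^N := by positivity
        linarith

lemma sum_choose_bound {u d : ℕ} (hd : 1 ≤ d) (hdu100 : 100 * d ≤ u) :
    ((2 ^ d * ∑ j ∈ Finset.range (d - d / 2), (u - d).choose j : ℕ) : ℝ)
      ≤ 2 * 2 ^ d * ((d:ℝ)/((u:ℝ)-(d:ℝ))) ^ (d/2+1) * (u.choose d : ℝ) := by
  have hdu : d < u := by omega
  have hud : (d:ℝ) < u := by exact_mod_cast hdu
  have hudpos : (0:ℝ) < (u:ℝ) - d := by linarith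
  set p : ℝ := (d:ℝ)/((u:ℝ)-d) with hp
  have hp0 : 0 ≤ p := div_nonneg (Nat.cast_nonneg d) hudpos.le
  have hphalf : p ≤ 1/2 := by
    rw [hp, div_le_div_iff₀ hudpos (by norm_num : (0:ℝ) < 2)]
    have h100 : (100:ℝ) * d ≤ u := by exact_mod_cast hdu100
    have hd1 : (1:ℝ) ≤ d := by exact_mod_cast hd
    nlinarith
  set N := d - d / 2 with hN
  set m := N - 1 with hm
  have hNm : N = m + 1 := by omega
  -- bound each term
  have hterm : ∀ j ∈ Finset.range N, ((u - d).choose j : ℝ) ≤ (u.choose d : ℝ) * (p ^ (d/2+1) * p ^ (m - j)) := by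
    intro j hj
    rw [Finset.mem_range] at hj
    have hjd : j ≤ d := by omega
    have h1 : ((u - d).choose j : ℝ) ≤ ((u.choose j : ℕ) : ℝ) := by
      exact_mod_cast Nat.choose_le_choose j (Nat.sub_le u d)
    have h2 : ((u.choose j : ℕ) : ℝ) ≤ (u.choose d : ℝ) * p ^ (d - j) := by
      have := choose_ratio hdu (d - j) (by omega)
      have hdj : d - (d - j) = j := by omega
      rwa [hdj] at this
    have h3 : p ^ (d - j) = p ^ (d/2+1) * p ^ (m - j) := by
      rw [← pow_add]
      congr 1
      omega
    rw [← h3]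
    exact h1.trans h2
  calc ((2 ^ d * ∑ j ∈ Finset.range N, (u - d).choose j : ℕ) : ℝ)
      = (2:ℝ)^d * ∑ j ∈ Finset.range N, ((u - d).choose j : ℝ) := by push_cast; ring
    _ ≤ (2:ℝ)^d * ∑ j ∈ Finset.range N, (u.choose d : ℝ) * (p ^ (d/2+1) * p ^ (m - j)) := by
        apply mul_le_mul_of_nonneg_left (Finset.sum_le_sum hterm) (by positivity)
    _ = (2:ℝ)^d * ((u.choose d : ℝ) * p ^ (d/2+1) * ∑ j ∈ Finset.range N, p ^ (m - j)) := by
        simp only [Finset.mul_sum]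
        exact Finset.sum_congr rfl (fun j _ => by ring)
    _ ≤ (2:ℝ)^d * ((u.choose d : ℝ) * p ^ (d/2+1) * 2) := by
        apply mul_le_mul_of_nonneg_left _ (by positivity)
        apply mul_le_mul_of_nonneg_left _ (by positivity)
        have hrefl : ∑ j ∈ Finset.range N, p ^ (m - j) = ∑ i ∈ Finset.range N, p ^ i := by
          rw [hNm, ← Finset.sum_range_reflect (fun i => p ^ i) (m+1)]
          exact Finset.sum_congr rfl (fun j hj => by congr 1 <;> omega)
        rw [hrefl]
        exact geom_half_bound N hp0 hphalf
    _ = 2 * 2 ^ d * p ^ (d/2+1) * (u.choose d : ℝ) := by ring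

lemma sum_fn_prod {X : Type*} [Fintype X] [DecidableEq X] (n : ℕ) (f : X → ℝ) :
    ∑ S : Fin n → X, ∏ j, f (S j) = (∑ x, f x) ^ n := by
  classical
  rw [← Fintype.piFinset_univ, ← Finset.prod_univ_sum (fun _ : Fin n => (Finset.univ : Finset X)) (fun _ x => f x)]
  simp

lemma sum_label_ite (u : ℕ) (g : Fin u → ℝ) :
    ∑ x : Fin u × Label, (if x.2 = lpos then g x.1 else 0) = ∑ i, g i := by
  rw [Fintype.sum_prod_type]
  apply Finset.sum_congr rfl
  intro i _
  rw [Finset.sum_eq_single_of_mem lpos (Finset.mem_univ lpos)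
    (fun b _ hb => if_neg hb)]
  exact if_pos rfl

set_option maxHeartbeats 1000000 in

lemma numeric_bound (u d n : ℕ) (α : ℝ) (hd : 1 ≤ d)
    (hαs : α^2 ≤ (u:ℝ) * Real.log ((u:ℝ)/(d:ℝ)) / (100 * (n:ℝ)))
    (hdC : 100 * (d:ℝ) ≤ (u:ℝ)) (huC : 100 * (u:ℝ) ≤ (n:ℝ)) :
    (4 * ((d:ℝ)/((u:ℝ)-(d:ℝ)))) ^ (d/2+1) * (1 + (d:ℝ)*α^2/((u:ℝ)-(d:ℝ)))^n ≤ 225/256 := by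
  set D := (d:ℝ) with hD
  set U := (u:ℝ) with hU
  set Nr := (n:ℝ) with hNr
  have hD1 : (1:ℝ) ≤ D := by rw [hD]; exact_mod_cast hd
  have hUD : D < U := by nlinarith
  have hUDpos : (0:ℝ) < U - D := by linarith
  have hU0 : (0:ℝ) < U := by linarith
  have hN0 : (0:ℝ) < Nr := by nlinarith
  have hUD99 : 99 * D ≤ U - D := by linarith
  have hUD99' : 99 * U ≤ 100 * (U - D) := by linarith
  set L := Real.log (U / D) with hL
  have hL100 : Real.log 100 ≤ L := by
    apply Real.log_le_log (by norm_num)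
    rw [le_div_iff₀ (by linarith)]
    nlinarith
  have hL0 : 0 ≤ L := le_trans (Real.log_nonneg (by norm_num)) hL100
  have hx0 : 0 ≤ D * α^2 / (U - D) := by positivity
  have hnx : Nr * (D * α^2 / (U - D)) ≤ D * L / 99 := by
    have h1 : Nr * α^2 ≤ U * L / 100 := by
      have := mul_le_mul_of_nonneg_left hαs hN0.le
      calc Nr * α^2 ≤ Nr * (U * L / (100 * Nr)) := this
        _ = U * L / 100 := by field_simp
    have h2 : 99 * (Nr * (D * α^2)) ≤ 99 * D * (U * L / 100) := by nlinarith
    rw [show Nr * (D * α^2 / (U - D)) = Nr * (D * α^2) / (U - D) from by ring,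
      div_le_div_iff₀ hUDpos (by norm_num : (0:ℝ) < 99)]
    calc Nr * (D * α^2) * 99 = 99 * (Nr * (D * α^2)) := by ring
      _ ≤ 99 * D * (U * L / 100) := h2
      _ = D * L * (99 * U / 100) := by ring
      _ ≤ D * L * (U - D) := by
          apply mul_le_mul_of_nonneg_left _ (by positivity)
          linarith
  set B := Real.log ((U - D) / (4 * D)) with hB
  have hBlog : Real.log (4 * (D / (U - D))) = -B := by
    rw [hB, ← Real.log_inv]
    congr 1
    field_simp
  have hB1 : 2 * Real.log (256/225) ≤ B := by
    have h1 : Real.log (((256:ℝ)/225)^2) ≤ Real.log (99/4) := by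
      apply Real.log_le_log (by norm_num)
      norm_num
    rw [Real.log_pow] at h1
    push_cast at h1
    have h2 : Real.log ((99:ℝ)/4) ≤ B := by
      apply Real.log_le_log (by norm_num)
      rw [div_le_div_iff₀ (by norm_num : (0:ℝ) < 4) (by positivity)]
      linarith
    linarith
  have hB0 : 0 ≤ B := by
    have : (0:ℝ) ≤ Real.log (256/225) := Real.log_nonneg (by norm_num)
    linarith
  have hB2 : 2 * L ≤ 99 * B := by
    have hstep : Real.log ((99/400 : ℝ) * (U / D)) ≤ B := by
      apply Real.log_le_log (by positivity)
      rw [show (99/400:ℝ) * (U / D) = 99 * U / (400 * D) from by ring,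
        div_le_div_iff₀ (by positivity) (by positivity)]
      nlinarith
    have hsplit : Real.log ((99/400 : ℝ) * (U / D)) = Real.log (99/400 : ℝ) + L := by
      rw [Real.log_mul (by norm_num) (by positivity)]
    set c := Real.log ((400:ℝ)/99) with hc
    have hcneg : Real.log ((99:ℝ)/400) = -c := by
      rw [hc, ← Real.log_inv]; norm_num
    have hc5 : c ≤ Real.log 5 := by
      apply Real.log_le_log (by norm_num); norm_num
    have h25 : Real.log ((5:ℝ)^2) ≤ Real.log 100 := by
      apply Real.log_le_log (by norm_num); norm_num
    rw [Real.log_pow] at h25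
    push_cast at h25
    have hlog5 : 0 ≤ Real.log (5:ℝ) := Real.log_nonneg (by norm_num)
    rw [hsplit, hcneg] at hstep
    -- hstep : -c + L ≤ B; need 2L ≤ 99B
    linarith
  have hk0 : (D+1)/2 ≤ ((d/2+1 : ℕ):ℝ) := by
    have h : d + 1 ≤ 2*(d/2+1) := by omega
    have h' : (d:ℝ) + 1 ≤ 2*((d/2+1 : ℕ):ℝ) := by exact_mod_cast h
    rw [hD]; linarith
  have hkey : Nr * (D * α^2 / (U - D)) + Real.log (256/225) ≤ ((d/2+1 : ℕ):ℝ) * B := by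
    have hBL : 2*L/99 ≤ B := by linarith
    have h1 : ((D+1)/2) * B ≤ ((d/2+1 : ℕ):ℝ) * B := mul_le_mul_of_nonneg_right hk0 hB0
    have h2a : D * (2*L/99) ≤ D * B := mul_le_mul_of_nonneg_left hBL (by linarith)
    have h2 : D * L / 99 + Real.log (256/225) ≤ ((D+1)/2) * B := by linarith
    linarith
  -- final combination
  set x := D * α^2 / (U - D) with hx
  have h4p : (0:ℝ) < 4 * (D / (U - D)) := by positivity
  have hpow : (4 * (D/(U-D)))^(d/2+1) = Real.exp (((d/2+1 : ℕ):ℝ) * Real.log (4 * (D/(U-D)))) := by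
    rw [Real.exp_nat_mul, Real.exp_log h4p]
  have hFn : (1 + x)^n ≤ Real.exp (Nr * x) := by
    calc (1 + x)^n ≤ (Real.exp x)^n := by
          apply pow_le_pow_left₀ (by linarith) (by linarith [Real.add_one_le_exp x])
      _ = Real.exp (Nr * x) := by rw [hNr, ← Real.exp_nat_mul]
  have hlog225 : Real.log ((225:ℝ)/256) = - Real.log ((256:ℝ)/225) := by
    rw [← Real.log_inv]; norm_num
  calc (4 * (D/(U-D)))^(d/2+1) * (1 + x)^n
      ≤ Real.exp (((d/2+1 : ℕ):ℝ) * Real.log (4 * (D/(U-D)))) * Real.exp (Nr * x) := by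
        rw [hpow]
        exact mul_le_mul_of_nonneg_left hFn (by positivity)
    _ = Real.exp (((d/2+1 : ℕ):ℝ) * (-B) + Nr * x) := by rw [hBlog, ← Real.exp_add]
    _ ≤ Real.exp (Real.log ((225:ℝ)/256)) := by
        apply Real.exp_le_exp.mpr
        rw [hlog225]
        linarith
    _ = 225/256 := Real.exp_log (by norm_num)

noncomputable def qfun (u : ℕ) : Fin u × Label → ℝ := fun x => if x.2 = lpos then 1/(u:ℝ) else 0
noncomputable def vfun (u d : ℕ) (α : ℝ) (h : Fin u → Label) : Fin u × Label → ℝ :=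
  fun x => if x.2 = lpos then (u:ℝ) * (wR u d α h x.1)^2 else 0

lemma qv_fact {u d : ℕ} {α : ℝ} (hu : 0 < u) (h : Fin u → Label) (x : Fin u × Label) :
    (wlab u d α h x)^2 = qfun u x * vfun u d α h x := by
  have hu0 : ((u:ℝ)) ≠ 0 := by positivity
  unfold wlab qfun vfun
  split
  · field_simp
  · simp

lemma sum_qfun {u : ℕ} (hu : 0 < u) : ∑ x : Fin u × Label, qfun u x = 1 := by
  have hu0 : ((u:ℝ)) ≠ 0 := by
    have : (0:ℝ) < u := by exact_mod_cast hu
    linarith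
  unfold qfun
  rw [sum_label_ite u (fun _ => 1/(u:ℝ))]
  rw [Finset.sum_const, Finset.card_univ, Fintype.card_fin, nsmul_eq_mul]
  field_simp

lemma sum_vfun {u d : ℕ} {α : ℝ} (hdu : d < u) {h : Fin u → Label} (hh : h ∈ Hfin u d) :
    ∑ x : Fin u × Label, vfun u d α h x = 1 + (d:ℝ) * α^2 / ((u:ℝ) - d) := by
  unfold vfun
  rw [sum_label_ite u (fun i => (u:ℝ) * (wR u d α h i)^2), ← Finset.mul_sum]
  exact sum_wR_sq hdu hh

set_option maxHeartbeats 2000000 in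
lemma main_real (u d n : ℕ) (α : ℝ) (A : (Fin n → Fin u × Label) → (Fin u → Label))
    (hd : 1 ≤ d) (hdu100 : 100 * d ≤ u)
    (hα0 : 0 ≤ α) (hα1 : α ≤ 1)
    (hαs : α^2 ≤ (u:ℝ) * Real.log ((u:ℝ)/(d:ℝ)) / (100 * (n:ℝ)))
    (huC : 100 * (u:ℝ) ≤ (n:ℝ))
    (hA : ∀ S, A S ∈ Hfin u d) :
    ∑ h ∈ Hfin u d, ∑ S ∈ Finset.univ.filter
        (fun S : Fin n → Fin u × Label =>
          d/2 + 1 ≤ (Finset.univ.filter fun i => A S i = lneg ∧ h i = lneg).card),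
        (∏ j, wlab u d α h (S j))
      ≤ (15/16) * ((Hfin u d).card : ℝ) := by
  classical
  have hdu : d < u := by omega
  have hu : 0 < u := by omega
  have hu0 : (0:ℝ) < u := by exact_mod_cast hu
  have hud : (d:ℝ) < u := by exact_mod_cast hdu
  have hudpos : (0:ℝ) < (u:ℝ) - d := by linarith
  have hdC : 100 * (d:ℝ) ≤ (u:ℝ) := by exact_mod_cast hdu100
  have hwnn : ∀ h : Fin u → Label, ∀ i, 0 ≤ wR u d α h i := fun h i => wR_nonneg hdu hα0 hα1 h i
  have hlnn : ∀ h : Fin u → Label, ∀ x, 0 ≤ wlab u d α h x := fun h x => wlab_nonneg (hwnn h) x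
  have hfnn : ∀ (h : Fin u → Label) (S : Fin n → Fin u × Label), 0 ≤ ∏ j, wlab u d α h (S j) :=
    fun h S => Finset.prod_nonneg fun j _ => hlnn h (S j)
  have hvnn : ∀ (h : Fin u → Label) (x : Fin u × Label), 0 ≤ vfun u d α h x := by
    intro h x
    unfold vfun
    split
    · have := hwnn h x.1; positivity
    · exact le_rfl
  have hqnn : ∀ x : Fin u × Label, 0 ≤ qfun u x := by
    intro x; unfold qfun; split
    · positivity
    · exact le_rfl
  set F : ℝ := 1 + (d:ℝ) * α^2 / ((u:ℝ) - d) with hF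
  have hF0 : (0:ℝ) ≤ F := by positivity
  set p : ℝ := (d:ℝ)/((u:ℝ)-(d:ℝ)) with hp
  have hp0 : (0:ℝ) ≤ p := by positivity
  set NBn : ℕ := 2 ^ d * ∑ j ∈ Finset.range (d - d / 2), (u - d).choose j with hNBn
  -- step A : swap order of summation
  have swap : ∑ h ∈ Hfin u d, ∑ S ∈ Finset.univ.filter
        (fun S : Fin n → Fin u × Label =>
          d/2 + 1 ≤ (Finset.univ.filter fun i => A S i = lneg ∧ h i = lneg).card),
        (∏ j, wlab u d α h (S j))
      = ∑ S : Fin n → Fin u × Label, ∑ h ∈ Hfin u d,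
          (if d/2 + 1 ≤ (Finset.univ.filter fun i => A S i = lneg ∧ h i = lneg).card
            then ∏ j, wlab u d α h (S j) else 0) := by
    simp only [Finset.sum_filter]
    exact Finset.sum_comm
  -- counting bound
  have cardbound : ∀ S : Fin n → Fin u × Label,
      (((Hfin u d).filter (fun h =>
        d/2 + 1 ≤ (Finset.univ.filter fun i => A S i = lneg ∧ h i = lneg).card)).card : ℝ)
      ≤ (NBn : ℝ) := by
    intro S
    have hAS : (negset (A S)).card = d := card_negset (hA S)
    have heq : ((Hfin u d).filter (fun h =>
        d/2 + 1 ≤ (Finset.univ.filter fun i => A S i = lneg ∧ h i = lneg).card))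
        = ((Hfin u d).filter (fun h => d/2 + 1 ≤ (negset (A S) ∩ negset h).card)) := by
      apply Finset.filter_congr
      intro h _
      have : (Finset.univ.filter fun i => A S i = lneg ∧ h i = lneg)
          = negset (A S) ∩ negset h := by
        ext i; simp [negset, Finset.mem_inter]
      rw [this]
    rw [heq]
    exact_mod_cast count_overlap hd (negset (A S)) hAS
  -- step B : Cauchy-Schwarz over h, for fixed S
  have stepB : ∀ S : Fin n → Fin u × Label,
      (∑ h ∈ Hfin u d,
        (if d/2 + 1 ≤ (Finset.univ.filter fun i => A S i = lneg ∧ h i = lneg).card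
          then ∏ j, wlab u d α h (S j) else 0))
      ≤ Real.sqrt (NBn : ℝ) * Real.sqrt (∑ h ∈ Hfin u d, (∏ j, wlab u d α h (S j))^2) := by
    intro S
    have hsq := Finset.sum_mul_sq_le_sq_mul_sq (Hfin u d)
      (fun h => if d/2 + 1 ≤ (Finset.univ.filter fun i => A S i = lneg ∧ h i = lneg).card
        then (1:ℝ) else 0)
      (fun h => ∏ j, wlab u d α h (S j))
    have e1 : ∀ h : Fin u → Label,
        (if d/2 + 1 ≤ (Finset.univ.filter fun i => A S i = lneg ∧ h i = lneg).card
          then (1:ℝ) else 0) * (∏ j, wlab u d α h (S j))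
        = (if d/2 + 1 ≤ (Finset.univ.filter fun i => A S i = lneg ∧ h i = lneg).card
          then ∏ j, wlab u d α h (S j) else 0) := by
      intro h; split <;> simp
    have e2 : (∑ h ∈ Hfin u d,
        (if d/2 + 1 ≤ (Finset.univ.filter fun i => A S i = lneg ∧ h i = lneg).card
          then (1:ℝ) else 0)^2)
        = (((Hfin u d).filter (fun h =>
            d/2 + 1 ≤ (Finset.univ.filter fun i => A S i = lneg ∧ h i = lneg).card)).card : ℝ) := by
      have sq_ite : ∀ h : Fin u → Label,
          (if d/2 + 1 ≤ (Finset.univ.filter fun i => A S i = lneg ∧ h i = lneg).card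
            then (1:ℝ) else 0)^2
          = (if d/2 + 1 ≤ (Finset.univ.filter fun i => A S i = lneg ∧ h i = lneg).card
            then (1:ℝ) else 0) := by
        intro h; split <;> norm_num
      rw [Finset.sum_congr rfl (fun h _ => sq_ite h), Finset.sum_boole]
    rw [Finset.sum_congr rfl (fun h _ => e1 h), e2] at hsq
    have hL0 : 0 ≤ ∑ h ∈ Hfin u d,
        (if d/2 + 1 ≤ (Finset.univ.filter fun i => A S i = lneg ∧ h i = lneg).card
          then ∏ j, wlab u d α h (S j) else 0) := by
      apply Finset.sum_nonneg
      intro h _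
      split
      · exact hfnn h S
      · exact le_rfl
    have hsum2nn : 0 ≤ ∑ h ∈ Hfin u d, (∏ j, wlab u d α h (S j))^2 := by
      apply Finset.sum_nonneg; intro h _; positivity
    have hsum2 : (∑ h ∈ Hfin u d,
        (if d/2 + 1 ≤ (Finset.univ.filter fun i => A S i = lneg ∧ h i = lneg).card
          then ∏ j, wlab u d α h (S j) else 0))^2
        ≤ (NBn:ℝ) * ∑ h ∈ Hfin u d, (∏ j, wlab u d α h (S j))^2 := by
      exact le_trans hsq (mul_le_mul_of_nonneg_right (cardbound S) hsum2nn)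
    calc (∑ h ∈ Hfin u d,
        (if d/2 + 1 ≤ (Finset.univ.filter fun i => A S i = lneg ∧ h i = lneg).card
          then ∏ j, wlab u d α h (S j) else 0))
        = Real.sqrt ((∑ h ∈ Hfin u d,
          (if d/2 + 1 ≤ (Finset.univ.filter fun i => A S i = lneg ∧ h i = lneg).card
            then ∏ j, wlab u d α h (S j) else 0))^2) := (Real.sqrt_sq hL0).symm
      _ ≤ Real.sqrt ((NBn:ℝ) * ∑ h ∈ Hfin u d, (∏ j, wlab u d α h (S j))^2) :=
          Real.sqrt_le_sqrt hsum2
      _ = Real.sqrt (NBn:ℝ) * Real.sqrt (∑ h ∈ Hfin u d, (∏ j, wlab u d α h (S j))^2) :=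
          Real.sqrt_mul (Nat.cast_nonneg _) _
  -- step C
  have hfprod : ∀ (h : Fin u → Label) (S : Fin n → Fin u × Label),
      (∏ j, wlab u d α h (S j))^2
        = (∏ j, qfun u (S j)) * (∏ j, vfun u d α h (S j)) := by
    intro h S
    rw [← Finset.prod_mul_distrib, ← Finset.prod_pow]
    exact Finset.prod_congr rfl fun j _ => qv_fact hu h (S j)
  have hQV : ∀ S : Fin n → Fin u × Label,
      ∑ h ∈ Hfin u d, (∏ j, wlab u d α h (S j))^2
        = (∏ j, qfun u (S j)) * (∑ h ∈ Hfin u d, ∏ j, vfun u d α h (S j)) := by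
    intro S
    rw [Finset.mul_sum]
    exact Finset.sum_congr rfl fun h _ => hfprod h S
  have hsumQ : ∑ S : Fin n → Fin u × Label, ∏ j, qfun u (S j) = 1 := by
    rw [sum_fn_prod, sum_qfun hu, one_pow]
  have hsumV : ∑ S : Fin n → Fin u × Label, ∑ h ∈ Hfin u d, ∏ j, vfun u d α h (S j)
      = ((Hfin u d).card : ℝ) * F ^ n := by
    rw [Finset.sum_comm]
    rw [Finset.sum_congr rfl (fun h hh => by rw [sum_fn_prod n (vfun u d α h), sum_vfun hdu hh])]
    rw [Finset.sum_const, nsmul_eq_mul]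
  have hQprod0 : ∀ S : Fin n → Fin u × Label, 0 ≤ ∏ j, qfun u (S j) :=
    fun S => Finset.prod_nonneg fun j _ => hqnn (S j)
  have hVsum0 : ∀ S : Fin n → Fin u × Label, 0 ≤ ∑ h ∈ Hfin u d, ∏ j, vfun u d α h (S j) :=
    fun S => Finset.sum_nonneg fun h _ => Finset.prod_nonneg fun j _ => hvnn h (S j)
  have stepC : ∑ S : Fin n → Fin u × Label,
      Real.sqrt (∑ h ∈ Hfin u d, (∏ j, wlab u d α h (S j))^2)
      ≤ Real.sqrt (((Hfin u d).card : ℝ) * F ^ n) := by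
    have hCS := Finset.sum_mul_sq_le_sq_mul_sq Finset.univ
      (fun S : Fin n → Fin u × Label => Real.sqrt (∏ j, qfun u (S j)))
      (fun S : Fin n → Fin u × Label => Real.sqrt (∑ h ∈ Hfin u d, ∏ j, vfun u d α h (S j)))
    have e3 : ∀ S : Fin n → Fin u × Label,
        Real.sqrt (∏ j, qfun u (S j)) * Real.sqrt (∑ h ∈ Hfin u d, ∏ j, vfun u d α h (S j))
          = Real.sqrt (∑ h ∈ Hfin u d, (∏ j, wlab u d α h (S j))^2) := by
      intro S
      rw [hQV S, Real.sqrt_mul (hQprod0 S)]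
    have e4 : ∀ S : Fin n → Fin u × Label,
        (Real.sqrt (∏ j, qfun u (S j)))^2 = ∏ j, qfun u (S j) :=
      fun S => Real.sq_sqrt (hQprod0 S)
    have e5 : ∀ S : Fin n → Fin u × Label,
        (Real.sqrt (∑ h ∈ Hfin u d, ∏ j, vfun u d α h (S j)))^2
          = ∑ h ∈ Hfin u d, ∏ j, vfun u d α h (S j) :=
      fun S => Real.sq_sqrt (hVsum0 S)
    rw [Finset.sum_congr rfl (fun S _ => e3 S), Finset.sum_congr rfl (fun S _ => e4 S),
      Finset.sum_congr rfl (fun S _ => e5 S), hsumQ, hsumV, one_mul] at hCS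
    have hL0 : 0 ≤ ∑ S : Fin n → Fin u × Label,
        Real.sqrt (∑ h ∈ Hfin u d, (∏ j, wlab u d α h (S j))^2) := by
      apply Finset.sum_nonneg; intro S _; exact Real.sqrt_nonneg _
    calc ∑ S : Fin n → Fin u × Label,
        Real.sqrt (∑ h ∈ Hfin u d, (∏ j, wlab u d α h (S j))^2)
        = Real.sqrt ((∑ S : Fin n → Fin u × Label,
            Real.sqrt (∑ h ∈ Hfin u d, (∏ j, wlab u d α h (S j))^2))^2) := (Real.sqrt_sq hL0).symm
      _ ≤ Real.sqrt (((Hfin u d).card : ℝ) * F ^ n) := Real.sqrt_le_sqrt hCS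
  -- final numeric combination
  have hNBr : (NBn:ℝ) ≤ 2 * 2 ^ d * p ^ (d/2+1) * (u.choose d : ℝ) := by
    rw [hNBn]
    exact sum_choose_bound hd hdu100
  have hHcard : ((Hfin u d).card : ℝ) = (u.choose d : ℝ) := by
    rw [card_Hfin u d hdu.le]
  have hkey : 2 * 2 ^ d * p ^ (d/2+1) * F ^ n ≤ 225/256 := by
    have hnum := numeric_bound u d n α hd hαs hdC huC
    have h4 : (4 * p) ^ (d/2+1) = 4 ^ (d/2+1) * p ^ (d/2+1) := mul_pow _ _ _
    have h2d : (2:ℝ) * 2 ^ d ≤ 4 ^ (d/2+1) := by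
      have e : (2:ℝ) * 2 ^ d = 2 ^ (d+1) := by ring
      have e2 : (4:ℝ) ^ (d/2+1) = 2 ^ (2*(d/2+1)) := by
        rw [pow_mul]; norm_num
      rw [e, e2]
      apply pow_le_pow_right₀ (by norm_num)
      omega
    have hFn0 : (0:ℝ) ≤ F ^ n := by positivity
    have hpk0 : (0:ℝ) ≤ p ^ (d/2+1) := by positivity
    calc 2 * 2 ^ d * p ^ (d/2+1) * F ^ n
        ≤ 4 ^ (d/2+1) * p ^ (d/2+1) * F ^ n := by
          apply mul_le_mul_of_nonneg_right (mul_le_mul_of_nonneg_right h2d hpk0) hFn0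
      _ = (4 * p) ^ (d/2+1) * F ^ n := by rw [h4]
      _ ≤ 225/256 := hnum
  have hmain : (NBn:ℝ) * (((Hfin u d).card : ℝ) * F ^ n) ≤ ((15/16) * ((Hfin u d).card : ℝ))^2 := by
    rw [hHcard]
    have hFn0 : (0:ℝ) ≤ F ^ n := by positivity
    have h1 : (NBn:ℝ) * ((u.choose d:ℝ) * F ^ n)
        ≤ (2 * 2 ^ d * p ^ (d/2+1) * (u.choose d : ℝ)) * ((u.choose d:ℝ) * F ^ n) :=
      mul_le_mul_of_nonneg_right hNBr (by positivity)
    have h2 : (2 * 2 ^ d * p ^ (d/2+1) * (u.choose d : ℝ)) * ((u.choose d:ℝ) * F ^ n)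
        = (2 * 2 ^ d * p ^ (d/2+1) * F ^ n) * (u.choose d:ℝ)^2 := by ring
    have h3 : (2 * 2 ^ d * p ^ (d/2+1) * F ^ n) * (u.choose d:ℝ)^2
        ≤ (225/256) * (u.choose d:ℝ)^2 :=
      mul_le_mul_of_nonneg_right hkey (by positivity)
    have h4 : (225/256 : ℝ) * (u.choose d:ℝ)^2 = ((15/16) * (u.choose d:ℝ))^2 := by ring
    linarith
  -- assemble
  rw [swap]
  calc ∑ S : Fin n → Fin u × Label, ∑ h ∈ Hfin u d,
          (if d/2 + 1 ≤ (Finset.univ.filter fun i => A S i = lneg ∧ h i = lneg).card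
            then ∏ j, wlab u d α h (S j) else 0)
      ≤ ∑ S : Fin n → Fin u × Label,
          Real.sqrt (NBn : ℝ) * Real.sqrt (∑ h ∈ Hfin u d, (∏ j, wlab u d α h (S j))^2) :=
        Finset.sum_le_sum (fun S _ => stepB S)
    _ = Real.sqrt (NBn : ℝ) * ∑ S : Fin n → Fin u × Label,
          Real.sqrt (∑ h ∈ Hfin u d, (∏ j, wlab u d α h (S j))^2) := by
        rw [Finset.mul_sum]
    _ ≤ Real.sqrt (NBn : ℝ) * Real.sqrt (((Hfin u d).card : ℝ) * F ^ n) :=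
        mul_le_mul_of_nonneg_left stepC (Real.sqrt_nonneg _)
    _ = Real.sqrt ((NBn : ℝ) * (((Hfin u d).card : ℝ) * F ^ n)) :=
        (Real.sqrt_mul (Nat.cast_nonneg _) _).symm
    _ ≤ (15/16) * ((Hfin u d).card : ℝ) := by
        rw [show (15/16) * ((Hfin u d).card : ℝ)
          = Real.sqrt (((15/16) * ((Hfin u d).card : ℝ))^2) from (Real.sqrt_sq (by positivity)).symm]
        exact Real.sqrt_le_sqrt hmain

lemma half_iff (d c : ℕ) : ((c:ℝ) ≤ (d:ℝ)/2) ↔ ¬ (d/2 + 1 ≤ c) := by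
  rw [le_div_iff₀ (by norm_num : (0:ℝ) < 2)]
  constructor
  · intro hc
    have h2 : ((2*c:ℕ):ℝ) ≤ (d:ℝ) := by push_cast; linarith
    have : 2*c ≤ d := by exact_mod_cast h2
    omega
  · intro hc
    have h2 : 2*c ≤ d := by omega
    have h3 : ((2*c:ℕ):ℝ) ≤ (d:ℝ) := by exact_mod_cast h2
    push_cast at h3; linarith

lemma total_one {u d n : ℕ} {α : ℝ} (hdu : d < u) {h : Fin u → Label} (hh : h ∈ Hfin u d) :
    ∑ S : Fin n → Fin u × Label, ∏ j, wlab u d α h (S j) = 1 := by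
  rw [sum_fn_prod n (wlab u d α h)]
  have e : ∑ x : Fin u × Label, wlab u d α h x = 1 := by
    unfold wlab
    rw [sum_label_ite u (wR u d α h)]
    exact sum_wR hdu hh
  rw [e, one_pow]


/-- any proper learner fails with probability at least 1/16 over a uniformly
random `h` from `H` and a sample from `D_h^n` (Lemma 5).  The probability over the random
pair `(h, S)` is written as the average over `h ∈ H` of the sample-probabilities. -/
theorem proper_learner_often_fails :
    ∃ C' : ℝ, 2 < C' ∧
      ∀ (u d n : ℕ) (α : ℝ), 1 ≤ d → d < u → 0 < α → α < 1 →
        α ≤ min (Real.sqrt ((u : ℝ) * Real.log ((u : ℝ) / (d : ℝ)) / (C' * (n : ℝ)))) (1 / C') →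
        (d : ℝ) * C' ≤ (u : ℝ) → (u : ℝ) ≤ (n : ℝ) / C' →
        ∀ A : (Fin n → Fin u × Label) → (Fin u → Label), (∀ S, A S ∈ Hfin u d) →
          ENNReal.ofReal (1 / 16) ≤
            (∑ h ∈ Hfin u d,
              Measure.pi (fun _ : Fin n => Dh u d α h)
                {S | ((Finset.univ.filter
                    fun i => A S i = lneg ∧ h i = lneg).card : ℝ) ≤ (d : ℝ) / 2}) /
              ((Hfin u d).card : ℝ≥0∞) := by
  classical
  refine ⟨100, by norm_num, ?_⟩
  intro u d n α hd hdu hα0 hα1 hαmin hdC huC A hA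
  have hd1R : (1:ℝ) ≤ d := by exact_mod_cast hd
  have hdu100 : 100 * d ≤ u := by
    have h1 : ((100*d:ℕ):ℝ) ≤ (u:ℝ) := by push_cast; linarith
    exact_mod_cast h1
  have hn100 : 100 * (u:ℝ) ≤ (n:ℝ) := by
    rw [le_div_iff₀ (by norm_num : (0:ℝ) < 100)] at huC
    linarith
  have hL0 : 0 ≤ Real.log ((u:ℝ)/(d:ℝ)) := by
    apply Real.log_nonneg
    rw [le_div_iff₀ (by linarith : (0:ℝ) < (d:ℝ))]
    have : (d:ℝ) ≤ u := by
      have : (d:ℕ) ≤ u := hdu.le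
      exact_mod_cast this
    linarith
  have hn0R : (0:ℝ) < n := by linarith
  have hαs : α^2 ≤ (u:ℝ) * Real.log ((u:ℝ)/(d:ℝ)) / (100*(n:ℝ)) := by
    have h1 : α ≤ Real.sqrt ((u : ℝ) * Real.log ((u : ℝ) / (d : ℝ)) / (100 * (n : ℝ))) :=
      le_trans hαmin (min_le_left _ _)
    have hX0 : 0 ≤ (u : ℝ) * Real.log ((u : ℝ) / (d : ℝ)) / (100 * (n : ℝ)) := by
      apply div_nonneg (mul_nonneg (Nat.cast_nonneg u) hL0)
      linarith
    have h2 : α^2 ≤ (Real.sqrt ((u : ℝ) * Real.log ((u : ℝ) / (d : ℝ)) / (100 * (n : ℝ))))^2 :=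
      pow_le_pow_left₀ hα0.le h1 2
    rwa [Real.sq_sqrt hX0] at h2
  have hwnn : ∀ h : Fin u → Label, ∀ i, 0 ≤ wR u d α h i :=
    fun h i => wR_nonneg hdu hα0.le hα1.le h i
  have hlnn : ∀ h : Fin u → Label, ∀ x, 0 ≤ wlab u d α h x := fun h x => wlab_nonneg (hwnn h) x
  have hfnn : ∀ (h : Fin u → Label) (S : Fin n → Fin u × Label), 0 ≤ ∏ j, wlab u d α h (S j) :=
    fun h S => Finset.prod_nonneg fun j _ => hlnn h (S j)
  -- real-valued fail mass
  set R : (Fin u → Label) → ℝ := fun h =>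
    ∑ S ∈ Finset.univ.filter (fun S : Fin n → Fin u × Label =>
      ¬ (d/2 + 1 ≤ (Finset.univ.filter fun i => A S i = lneg ∧ h i = lneg).card)),
      ∏ j, wlab u d α h (S j) with hR
  set W : (Fin u → Label) → ℝ := fun h =>
    ∑ S ∈ Finset.univ.filter (fun S : Fin n → Fin u × Label =>
      d/2 + 1 ≤ (Finset.univ.filter fun i => A S i = lneg ∧ h i = lneg).card),
      ∏ j, wlab u d α h (S j) with hW
  have hRnn : ∀ h, 0 ≤ R h := by
    intro h
    apply Finset.sum_nonneg fun S _ => hfnn h S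
  have hmu : ∀ h ∈ Hfin u d,
      Measure.pi (fun _ : Fin n => Dh u d α h)
        {S | ((Finset.univ.filter fun i => A S i = lneg ∧ h i = lneg).card : ℝ) ≤ (d : ℝ) / 2}
      = ENNReal.ofReal (R h) := by
    intro h hh
    rw [pi_eval h (sum_wR hdu hh) (hwnn h)]
    have efil : (Finset.univ.filter (fun S : Fin n → Fin u × Label =>
        S ∈ {S | ((Finset.univ.filter fun i => A S i = lneg ∧ h i = lneg).card : ℝ) ≤ (d : ℝ) / 2}))
        = (Finset.univ.filter (fun S : Fin n → Fin u × Label =>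
          ¬ (d/2 + 1 ≤ (Finset.univ.filter fun i => A S i = lneg ∧ h i = lneg).card))) := by
      apply Finset.filter_congr
      intro S _
      simp only [Set.mem_setOf_eq]
      exact half_iff d _
    rw [efil, ← ENNReal.ofReal_sum_of_nonneg (fun S _ => hfnn h S)]
  have htot : ∀ h ∈ Hfin u d, W h + R h = 1 := by
    intro h hh
    rw [hW, hR]
    rw [Finset.sum_filter_add_sum_filter_not]
    exact total_one hdu hh
  have hmainW : ∑ h ∈ Hfin u d, W h ≤ (15/16) * ((Hfin u d).card : ℝ) :=
    main_real u d n α A hd hdu100 hα0.le hα1.le hαs hn100 hA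
  have hsumR : ((Hfin u d).card : ℝ) / 16 ≤ ∑ h ∈ Hfin u d, R h := by
    have e1 : ∑ h ∈ Hfin u d, R h = ((Hfin u d).card : ℝ) - ∑ h ∈ Hfin u d, W h := by
      have : ∑ h ∈ Hfin u d, (W h + R h) = ((Hfin u d).card : ℝ) := by
        rw [Finset.sum_congr rfl htot, Finset.sum_const, nsmul_eq_mul, mul_one]
      rw [Finset.sum_add_distrib] at this
      linarith
    rw [e1]
    linarith
  -- ENNReal conversion
  have hcardpos : 0 < (Hfin u d).card := by
    rw [card_Hfin u d hdu.le]
    exact Nat.choose_pos hdu.le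
  rw [Finset.sum_congr rfl hmu, ← ENNReal.ofReal_sum_of_nonneg (fun h _ => hRnn h)]
  rw [ENNReal.le_div_iff_mul_le
    (Or.inl (by exact_mod_cast Nat.cast_ne_zero.mpr hcardpos.ne'))
    (Or.inl (ENNReal.natCast_ne_top _))]
  have ecast : ((Hfin u d).card : ℝ≥0∞) = ENNReal.ofReal (((Hfin u d).card : ℕ) : ℝ) := by
    rw [ENNReal.ofReal_natCast]
  rw [ecast, ← ENNReal.ofReal_mul (by norm_num)]
  apply ENNReal.ofReal_le_ofReal
  calc (1/16) * (((Hfin u d).card : ℕ) : ℝ) = ((Hfin u d).card : ℝ) / 16 := by ring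
    _ ≤ ∑ h ∈ Hfin u d, R h := hsumR
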